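/- Let g(z) = z + δz^d for |z| > 2 (d ≥ 2 an integer, 0 < δ). For δ sufficiently small (e.g. δ < 2^{-d}), every point w ∈ ℂ has at most d preimages under the full map g (defined as z for |z|≤1, z+δ(|z|-1)z^d for 1<|z|≤2, z+δz^d for |z|>2), and g has degree exactly d in the sense that some value has exactly d preimages. -/

import Mathlib

open Complex Set

/-- The map `g`: identity on the closed unit disc, `z + δ(|z|-1)z^d` for `1 < |z| ≤ 2`,
and `z + δ z^d` for `|z| > 2`. -/
noncomputable def g (δ : ℝ) (d : ℕ) (z : ℂ) : ℂ :=
  if ‖z‖ ≤ 1 then z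
  else if ‖z‖ ≤ 2 then z + δ * (‖z‖ - 1) * z ^ d
  else z + δ * z ^ d

namespace Stmt11Aux

open Polynomial

/-- cutoff function -/
noncomputable def φ (t : ℝ) : ℝ := max 0 (min (t - 1) 1)

lemma φ_nonneg (t : ℝ) : 0 ≤ φ t := le_max_left _ _

lemma φ_le_one (t : ℝ) : φ t ≤ 1 := max_le (by norm_num) (min_le_right _ _)

lemma φ_key (a b : ℝ) : φ a - φ b ≤ |a - b| := by
  have h0 : 0 ≤ |a - b| := abs_nonneg _
  have hab : a ≤ b + |a - b| := by
    have := le_abs_self (a - b); linarith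
  have hmono : φ a ≤ φ (b + |a - b|) := by
    unfold φ
    exact max_le_max le_rfl (min_le_min (by linarith) le_rfl)
  have h2 : φ (b + |a - b|) ≤ φ b + |a - b| := by
    unfold φ
    apply max_le
    · have := le_max_left (0:ℝ) (min (b-1) 1); linarith
    · calc min (b + |a - b| - 1) 1 ≤ min (b - 1) 1 + |a - b| := by
            rcases le_total (b - 1) 1 with h | h
            · rw [min_eq_left h]
              exact le_trans (min_le_left _ _) (by linarith)
            · rw [min_eq_right h]
              exact le_trans (min_le_right _ _) (by linarith)
        _ ≤ max 0 (min (b - 1) 1) + |a - b| := by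
            have := le_max_right (0:ℝ) (min (b-1) 1); linarith
  linarith

lemma φ_lip (s t : ℝ) : |φ s - φ t| ≤ |s - t| := by
  rw [abs_sub_le_iff]
  refine ⟨φ_key s t, ?_⟩
  rw [abs_sub_comm]
  exact φ_key t s

lemma g_eq (δ : ℝ) (d : ℕ) (z : ℂ) :
    g δ d z = z + (δ : ℂ) * (φ (‖z‖) : ℝ) * z ^ d := by
  unfold g φ
  split_ifs with h1 h2
  · have h : min (‖z‖ - 1) 1 ≤ 0 := le_trans (min_le_left _ _) (by linarith)
    rw [max_eq_left h]
    push_cast; ring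
  · push_neg at h1
    have hmin : min (‖z‖ - 1) 1 = ‖z‖ - 1 := min_eq_left (by linarith)
    rw [hmin, max_eq_right (by linarith)]
    push_cast; ring
  · push_neg at h1 h2
    have hmin : min (‖z‖ - 1) 1 = 1 := min_eq_right (by linarith)
    rw [hmin, max_eq_right (by norm_num)]
    push_cast; ring

lemma pow_sub_pow_bound (R : ℝ) (hR : 0 ≤ R) :
    ∀ (n : ℕ) (z₁ z₂ : ℂ), ‖z₁‖ ≤ R → ‖z₂‖ ≤ R →
    ‖z₁ ^ (n+1) - z₂ ^ (n+1)‖ ≤ (n+1) * R ^ n * ‖z₁ - z₂‖ := by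
  intro n
  induction n with
  | zero => intro z₁ z₂ h1 h2; simp
  | succ n ih =>
    intro z₁ z₂ h1 h2
    have key : z₁ ^ (n+1+1) - z₂ ^ (n+1+1)
        = z₁ * (z₁ ^ (n+1) - z₂ ^ (n+1)) + (z₁ - z₂) * z₂ ^ (n+1) := by ring
    have h3 : ‖z₁ * (z₁ ^ (n+1) - z₂ ^ (n+1))‖
        ≤ R * ((n+1) * R ^ n * ‖z₁ - z₂‖) := by
      rw [norm_mul]
      exact mul_le_mul h1 (ih z₁ z₂ h1 h2) (norm_nonneg _) hR
    have h4 : ‖(z₁ - z₂) * z₂ ^ (n+1)‖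
        ≤ ‖z₁ - z₂‖ * R ^ (n+1) := by
      rw [norm_mul, norm_pow]
      have := pow_le_pow_left₀ (norm_nonneg z₂) h2 (n+1)
      nlinarith [norm_nonneg (z₁ - z₂), pow_nonneg (norm_nonneg z₂) (n+1)]
    calc ‖z₁ ^ (n+1+1) - z₂ ^ (n+1+1)‖
        ≤ ‖z₁ * (z₁ ^ (n+1) - z₂ ^ (n+1))‖
          + ‖(z₁ - z₂) * z₂ ^ (n+1)‖ := by
          rw [key]; exact norm_add_le _ _
      _ ≤ R * ((n+1) * R ^ n * ‖z₁ - z₂‖)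
          + ‖z₁ - z₂‖ * R ^ (n+1) := add_le_add h3 h4
      _ = ((n:ℝ)+1+1) * R ^ (n+1) * ‖z₁ - z₂‖ := by ring
      _ = ((n+1:ℕ)+1 : ℝ) * R ^ (n+1) * ‖z₁ - z₂‖ := by push_cast; ring

/-- injectivity of `g` on the closed ball of radius 6 -/
lemma g_inj (δ : ℝ) (d : ℕ) (hd : 2 ≤ d) (hδ : 0 < δ)
    (hsmall : δ * ((d+1) * 6 ^ d) ≤ 1/2)
    {z₁ z₂ : ℂ} (h1 : ‖z₁‖ ≤ 6) (h2 : ‖z₂‖ ≤ 6)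
    (hg : g δ d z₁ = g δ d z₂) : z₁ = z₂ := by
  obtain ⟨e, rfl⟩ : ∃ e, d = e + 1 := ⟨d - 1, by omega⟩
  rw [g_eq, g_eq] at hg
  have hdiff : z₁ - z₂ = (δ:ℂ) * ((φ (‖z₂‖) : ℝ) * z₂ ^ (e+1)
      - (φ (‖z₁‖) : ℝ) * z₁ ^ (e+1)) := by
    have := hg
    field_simp at this ⊢
    linear_combination this
  have hsplit : (φ (‖z₂‖) : ℂ) * z₂ ^ (e+1) - (φ (‖z₁‖) : ℝ) * z₁ ^ (e+1)
      = ((φ (‖z₂‖) : ℝ) - (φ (‖z₁‖) : ℝ)) * z₂ ^ (e+1)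
        + (φ (‖z₁‖) : ℝ) * (z₂ ^ (e+1) - z₁ ^ (e+1)) := by ring
  have hb1 : ‖((φ (‖z₂‖) : ℝ) - (φ (‖z₁‖) : ℝ) : ℂ) * z₂ ^ (e+1)‖
      ≤ ‖z₁ - z₂‖ * 6 ^ (e+1) := by
    rw [norm_mul, norm_pow]
    have hφ : ‖((φ (‖z₂‖) : ℝ) - (φ (‖z₁‖) : ℝ) : ℂ)‖
        ≤ ‖z₁ - z₂‖ := by
      rw [show (((φ (‖z₂‖) : ℝ) : ℂ) - ((φ (‖z₁‖) : ℝ) : ℂ))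
          = ((φ (‖z₂‖) - φ (‖z₁‖) : ℝ) : ℂ) by push_cast; ring,
        Complex.norm_real, Real.norm_eq_abs]
      calc |φ (‖z₂‖) - φ (‖z₁‖)|
          ≤ |‖z₂‖ - ‖z₁‖| := φ_lip _ _
        _ ≤ ‖z₂ - z₁‖ := abs_norm_sub_norm_le _ _
        _ = ‖z₁ - z₂‖ := by rw [← norm_neg]; ring_nf
    exact mul_le_mul hφ (pow_le_pow_left₀ (norm_nonneg _) h2 _)
      (by positivity) (norm_nonneg _)
  have hb2 : ‖((φ (‖z₁‖) : ℝ) : ℂ) * (z₂ ^ (e+1) - z₁ ^ (e+1))‖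
      ≤ (e+1) * 6 ^ e * ‖z₁ - z₂‖ := by
    rw [norm_mul, Complex.norm_real, Real.norm_eq_abs, _root_.abs_of_nonneg (φ_nonneg _)]
    calc φ (‖z₁‖) * ‖z₂ ^ (e+1) - z₁ ^ (e+1)‖
        ≤ 1 * ((e+1) * 6 ^ e * ‖z₂ - z₁‖) := by
          exact mul_le_mul (φ_le_one _)
            (pow_sub_pow_bound 6 (by norm_num) e z₂ z₁ h2 h1)
            (norm_nonneg _) one_pos.le
      _ = (e+1) * 6 ^ e * ‖z₁ - z₂‖ := by
          rw [show z₂ - z₁ = -(z₁ - z₂) by ring, norm_neg]; ring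
  have hL : ‖z₁ - z₂‖
      ≤ δ * ((6:ℝ) ^ (e+1) + (e+1) * 6 ^ e) * ‖z₁ - z₂‖ := by
    calc ‖z₁ - z₂‖
        = δ * ‖(φ (‖z₂‖) : ℝ) * z₂ ^ (e+1)
            - (φ (‖z₁‖) : ℝ) * z₁ ^ (e+1)‖ := by
          rw [hdiff, norm_mul, Complex.norm_real, Real.norm_eq_abs, _root_.abs_of_nonneg hδ.le]
      _ ≤ δ * (‖(((φ (‖z₂‖) : ℝ) : ℂ)
              - ((φ (‖z₁‖) : ℝ) : ℂ)) * z₂ ^ (e+1)‖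
            + ‖((φ (‖z₁‖) : ℝ) : ℂ) * (z₂ ^ (e+1) - z₁ ^ (e+1))‖) := by
          rw [hsplit]
          exact mul_le_mul_of_nonneg_left (norm_add_le _ _) hδ.le
      _ ≤ δ * (‖z₁ - z₂‖ * 6 ^ (e+1)
            + (e+1) * 6 ^ e * ‖z₁ - z₂‖) := by
          exact mul_le_mul_of_nonneg_left (add_le_add hb1 hb2) hδ.le
      _ = δ * ((6:ℝ) ^ (e+1) + (e+1) * 6 ^ e) * ‖z₁ - z₂‖ := by ring
  have hC : δ * ((6:ℝ) ^ (e+1) + (e+1) * 6 ^ e) ≤ 1/2 := by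
    refine le_trans ?_ hsmall
    have h6 : (0:ℝ) < 6 ^ e := by positivity
    have hmono : (6:ℝ) ^ (e+1) + (e+1) * 6 ^ e ≤ ((e+1:ℕ) + 1 : ℝ) * 6 ^ (e+1) := by
      have hp : (6:ℝ) ^ (e+1) = 6 ^ e * 6 := pow_succ 6 e
      have he : (0:ℝ) ≤ (e:ℝ) := Nat.cast_nonneg e
      push_cast
      nlinarith [h6, hp, he]
    exact mul_le_mul_of_nonneg_left hmono hδ.le
  have hzero : ‖z₁ - z₂‖ ≤ 0 := by
    nlinarith [norm_nonneg (z₁ - z₂)]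
  have h0 : z₁ - z₂ = 0 :=
    norm_eq_zero.mp (le_antisymm hzero (norm_nonneg _))
  exact sub_eq_zero.mp h0

lemma g_outer (δ : ℝ) (d : ℕ) {z : ℂ} (hz : 2 < ‖z‖) :
    g δ d z = z + (δ:ℂ) * z ^ d := by
  unfold g
  rw [if_neg (by linarith), if_neg (by linarith)]

lemma g_abs_le (δ : ℝ) (d : ℕ) (hδ : 0 < δ) (h2 : δ * 2 ^ d ≤ 1)
    {z : ℂ} (hz : ‖z‖ ≤ 2) : ‖g δ d z‖ ≤ 3 := by
  rw [g_eq]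
  have h2d : ‖z‖ ^ d ≤ 2 ^ d := pow_le_pow_left₀ (norm_nonneg z) hz d
  calc ‖z + (δ:ℂ) * (φ (‖z‖) : ℝ) * z ^ d‖
      ≤ ‖z‖ + ‖(δ:ℂ) * (φ (‖z‖) : ℝ) * z ^ d‖ :=
        norm_add_le _ _
    _ ≤ 2 + δ * 2 ^ d := by
        rw [norm_mul, norm_mul, norm_pow, Complex.norm_real, Real.norm_eq_abs, Complex.norm_real, Real.norm_eq_abs,
          _root_.abs_of_nonneg hδ.le, _root_.abs_of_nonneg (φ_nonneg _)]
        have h3 : δ * φ (‖z‖) * ‖z‖ ^ d ≤ δ * 1 * 2 ^ d :=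
          mul_le_mul (mul_le_mul le_rfl (φ_le_one _) (φ_nonneg _) hδ.le) h2d
            (by positivity) (by positivity)
        linarith
    _ ≤ 3 := by linarith

/-- the polynomial whose roots are the solutions of `z + δ z^d = w` -/
noncomputable def Qp (δ : ℝ) (d : ℕ) (w : ℂ) : Polynomial ℂ :=
  X ^ d + (C ((δ:ℂ)⁻¹) * X + C (-(w * (δ:ℂ)⁻¹)))

variable {δ : ℝ} {d : ℕ} {w : ℂ}

lemma one_lt_d_cast (hd : 2 ≤ d) : (1 : WithBot ℕ) < (d : WithBot ℕ) := by
  exact_mod_cast (show (1:ℕ) < d by omega)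

lemma Qp_monic (hd : 2 ≤ d) : (Qp δ d w).Monic := by
  apply monic_X_pow_add
  exact lt_of_le_of_lt (degree_linear_le) (one_lt_d_cast hd)

lemma Qp_ne_zero (hd : 2 ≤ d) : Qp δ d w ≠ 0 := (Qp_monic hd).ne_zero

lemma Qp_degree (hd : 2 ≤ d) : (Qp δ d w).degree = d := by
  unfold Qp
  rw [degree_add_eq_left_of_degree_lt, degree_X_pow]
  rw [degree_X_pow]
  exact lt_of_le_of_lt (degree_linear_le) (one_lt_d_cast hd)

lemma Qp_natDegree (hd : 2 ≤ d) : (Qp δ d w).natDegree = d :=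
  natDegree_eq_of_degree_eq_some (Qp_degree hd)

lemma Qp_card_roots (hd : 2 ≤ d) : Multiset.card (Qp δ d w).roots = d := by
  rw [(splits_iff_card_roots).1 (IsAlgClosed.splits _), Qp_natDegree hd]

lemma Qp_root_iff (hδ : 0 < δ) (hd : 2 ≤ d) {z : ℂ} :
    (Qp δ d w).IsRoot z ↔ z + (δ:ℂ) * z ^ d = w := by
  have ha : (δ:ℂ) ≠ 0 := by exact_mod_cast hδ.ne'
  unfold Qp IsRoot
  simp only [eval_add, eval_pow, eval_X, eval_mul, eval_C]
  constructor
  · intro h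
    have h' := congrArg (fun t => (δ:ℂ) * t) h
    simp only [mul_zero] at h'
    field_simp at h'
    linear_combination h'
  · intro h
    field_simp
    linear_combination h

lemma Qp_coeff_zero (hd : 2 ≤ d) : (Qp δ d w).coeff 0 = -(w * (δ:ℂ)⁻¹) := by
  unfold Qp
  simp [coeff_X_pow, (show ¬(0 = d) by omega)]

lemma Qp_abs_prod (hδ : 0 < δ) (hd : 2 ≤ d) :
    ((Qp δ d w).roots.map (fun z : ℂ => ‖z‖)).prod = ‖w‖ / δ := by
  have h := (IsAlgClosed.splits (Qp (δ := δ) (d := d) (w := w))).coeff_zero_eq_prod_roots_of_monic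
    (Qp_monic hd)
  have habs := congrArg (fun z : ℂ => ‖z‖) h
  simp only [Qp_coeff_zero hd, norm_mul, norm_pow, norm_neg, norm_one, one_pow, one_mul,
    norm_inv, Complex.norm_real, Real.norm_eq_abs, _root_.abs_of_nonneg hδ.le] at habs
  rw [show ((Qp δ d w).roots.map (fun z : ℂ => ‖z‖)).prod = ‖(Qp δ d w).roots.prod‖ from
    (map_multiset_prod (normHom : ℂ →*₀ ℝ) _).symm, ← habs, div_eq_mul_inv]

lemma multiset_pow_card_le_prod (c : ℝ) (hc : 0 ≤ c) (s : Multiset ℝ) :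
    (∀ x ∈ s, c ≤ x) → c ^ (Multiset.card s) ≤ s.prod := by
  refine Multiset.induction_on s (by simp) ?_
  intro a t iht h
  rw [Multiset.prod_cons, Multiset.card_cons, pow_succ']
  have hat : c ≤ a := h a (Multiset.mem_cons_self _ _)
  have hts := iht (fun x hx => h x (Multiset.mem_cons_of_mem hx))
  exact mul_le_mul hat hts (pow_nonneg hc _) (le_trans hc hat)

lemma exists_small_root (hδ : 0 < δ) (hd : 2 ≤ d)
    (hsmall : δ * ((d+1) * 6 ^ d) ≤ 1/2) (hw : ‖w‖ ≤ 3) :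
    ∃ ρ, (Qp δ d w).IsRoot ρ ∧ ‖ρ‖ ≤ 6 := by
  by_contra hcon
  push_neg at hcon
  set s : Multiset ℝ := (Qp δ d w).roots.map (fun z : ℂ => ‖z‖) with hs
  have hcard : Multiset.card s = d := by rw [hs, Multiset.card_map, Qp_card_roots hd]
  have hmem : ∀ x ∈ s, 1/(2*δ) ≤ x ^ (d-1) := by
    intro x hx
    obtain ⟨ρ, hρ, rfl⟩ := Multiset.mem_map.mp hx
    have hroot : (Qp δ d w).IsRoot ρ := (mem_roots'.mp hρ).2
    have h6 : 6 < ‖ρ‖ := hcon ρ hroot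
    have heq : ρ + (δ:ℂ) * ρ ^ d = w := (Qp_root_iff hδ hd).mp hroot
    have h1 : δ * ‖ρ‖ ^ d = ‖w - ρ‖ := by
      have hv : (δ:ℂ) * ρ ^ d = w - ρ := by linear_combination heq
      calc δ * ‖ρ‖ ^ d = ‖(δ:ℂ) * ρ ^ d‖ := by
            rw [norm_mul, norm_pow, Complex.norm_real, Real.norm_eq_abs, _root_.abs_of_nonneg hδ.le]
        _ = _ := by rw [hv]
    have h3 : ‖ρ‖ ≤ ‖w - ρ‖ + ‖w‖ := by
      calc ‖ρ‖ = ‖w - (w - ρ)‖ := by congr 1; ring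
        _ ≤ ‖w‖ + ‖w - ρ‖ := by
            rw [sub_eq_add_neg]
            exact le_trans (norm_add_le _ _) (by rw [norm_neg])
        _ = _ := by ring
    have hρpos : 0 < ‖ρ‖ := by linarith
    have h5 : ‖ρ‖ ^ d = ‖ρ‖ * ‖ρ‖ ^ (d-1) := by
      rw [← pow_succ']
      congr 1; omega
    have h4 : ‖ρ‖ * (1/2) ≤ ‖ρ‖ * (δ * ‖ρ‖ ^ (d-1)) := by
      have : ‖ρ‖ / 2 ≤ δ * ‖ρ‖ ^ d := by rw [h1]; linarith
      rw [h5] at this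
      linarith
    have h6' : 1/2 ≤ δ * ‖ρ‖ ^ (d-1) := (mul_le_mul_iff_right₀ hρpos).mp h4
    rw [div_le_iff₀ (by positivity : (0:ℝ) < 2*δ)]
    linarith
  have hprod : s.prod = ‖w‖ / δ := Qp_abs_prod hδ hd
  have hlow : (1/(2*δ)) ^ d ≤ s.prod ^ (d-1) := by
    have hm : (s.map (· ^ (d-1))).prod = s.prod ^ (d-1) := by
      have := Multiset.prod_map_pow (m := s) (f := id) (n := d-1)
      simpa using this
    have h2 := multiset_pow_card_le_prod (1/(2*δ)) (by positivity) (s.map (· ^ (d-1)))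
      (by
        intro x hx
        obtain ⟨y, hy, rfl⟩ := Multiset.mem_map.mp hx
        exact hmem y hy)
    rw [Multiset.card_map, hcard, hm] at h2
    exact h2
  have ht3 : s.prod ≤ 3/δ := by
    rw [hprod]
    gcongr
  have ht0 : (0:ℝ) ≤ s.prod := by rw [hprod]; positivity
  have hup : s.prod ^ (d-1) ≤ (3/δ) ^ (d-1) := pow_le_pow_left₀ ht0 ht3 _
  set e := d - 1 with he
  have hd1 : d = e + 1 := by omega
  have h1 : ((1:ℝ)/(2*δ)) ^ (e+1) ≤ (3/δ) ^ e := by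
    rw [← hd1]
    exact le_trans hlow hup
  have hkey : (1:ℝ) ≤ 6 ^ e * (2 * δ) := by
    have hpos : (0:ℝ) < 2*δ := by positivity
    have h2 : ((1:ℝ)/(2*δ)) ^ (e+1) * (2*δ)^(e+1) ≤ (3/δ)^e * (2*δ)^(e+1) :=
      mul_le_mul_of_nonneg_right h1 (by positivity)
    have h3 : ((1:ℝ)/(2*δ)) ^ (e+1) * (2*δ)^(e+1) = 1 := by
      rw [← mul_pow, one_div_mul_cancel hpos.ne', one_pow]
    have h4 : (3/δ)^e * (2*δ)^(e+1) = 6^e * (2*δ) := by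
      rw [pow_succ, ← mul_assoc, ← mul_pow,
        show (3/δ) * (2*δ) = 6 by field_simp; ring]
    rw [h3, h4] at h2
    exact h2
  have h6d : (6:ℝ)^e ≤ 6^d := pow_le_pow_right₀ (by norm_num) (by omega)
  have hd3 : (3:ℝ) ≤ (d:ℝ)+1 := by
    have : (2:ℝ) ≤ (d:ℝ) := by exact_mod_cast hd
    linarith
  have hA : δ * 6^e ≤ δ * 6^d := mul_le_mul_of_nonneg_left h6d hδ.le
  have hB : 3 * (δ * 6^d) ≤ ((d:ℝ)+1) * (δ * 6^d) :=
    mul_le_mul_of_nonneg_right hd3 (by positivity)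
  have hC : ((d:ℝ)+1) * (δ * 6^d) ≤ 1/2 := by
    calc ((d:ℝ)+1) * (δ * 6^d) = δ * ((d+1) * 6^d) := by ring
      _ ≤ 1/2 := hsmall
  have hD : δ * 6^d ≤ 1/6 := by linarith
  linarith [hkey, hA, hD]

lemma Qp_derivative (hd : 2 ≤ d) :
    derivative (Qp δ d w) = C (d:ℂ) * X ^ (d-1) + C ((δ:ℂ)⁻¹) := by
  unfold Qp
  rw [derivative_add, derivative_add, derivative_X_pow, derivative_C,
    derivative_C_mul, derivative_X]
  ring

lemma Dp_ne_zero (hd : 2 ≤ d) : (C (d:ℂ) * X ^ (d-1) + C ((δ:ℂ)⁻¹)) ≠ 0 := by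
  have hd0 : ((d:ℂ)) ≠ 0 := by exact_mod_cast (show d ≠ 0 by omega)
  have hdeg : (C (d:ℂ) * X ^ (d-1) + C ((δ:ℂ)⁻¹) : Polynomial ℂ).degree
      = ((d-1 : ℕ) : WithBot ℕ) := by
    rw [degree_add_eq_left_of_degree_lt, degree_C_mul_X_pow _ hd0]
    rw [degree_C_mul_X_pow _ hd0]
    exact lt_of_le_of_lt degree_C_le (by exact_mod_cast (show (0:ℕ) < d-1 by omega))
  intro h0
  rw [h0, degree_zero] at hdeg
  simp at hdeg

lemma Qp_separable (hδ : 0 < δ) (hd : 2 ≤ d)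
    (hbad : ∀ x : ℂ, (C (d:ℂ) * X ^ (d-1) + C ((δ:ℂ)⁻¹)).IsRoot x →
      x + (δ:ℂ) * x ^ d ≠ w) :
    (Qp δ d w).Separable := by
  classical
  rw [Polynomial.separable_def, ← EuclideanDomain.gcd_isUnit_iff]
  by_contra hunit
  rw [Polynomial.isUnit_iff_degree_eq_zero] at hunit
  obtain ⟨x, hx⟩ := IsAlgClosed.exists_root _ hunit
  have hxQ : (Qp δ d w).IsRoot x := hx.dvd (EuclideanDomain.gcd_dvd_left _ _)
  have hxD : (derivative (Qp δ d w)).IsRoot x := hx.dvd (EuclideanDomain.gcd_dvd_right _ _)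
  rw [Qp_derivative hd] at hxD
  exact hbad x hxD ((Qp_root_iff hδ hd).mp hxQ)

end Stmt11Aux

theorem stmt11 (d : ℕ) (hd : 2 ≤ d) :
    ∃ δ₀ : ℝ, 0 < δ₀ ∧ ∀ δ : ℝ, 0 < δ → δ < δ₀ →
      (∀ w : ℂ, (g δ d ⁻¹' {w}).Finite ∧ Nat.card (g δ d ⁻¹' {w}) ≤ d) ∧
      (∃ w : ℂ, Nat.card (g δ d ⁻¹' {w}) = d) := by
  classical
  open Stmt11Aux Polynomial in
  refine ⟨1/(2*(((d:ℝ)+1)*6^d)), by positivity, ?_⟩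
  intro δ hδ hδlt
  have hApos : (0:ℝ) < ((d:ℝ)+1)*6^d := by positivity
  have hsmall : δ * (((d:ℝ)+1) * 6 ^ d) ≤ 1/2 := by
    have h := mul_lt_mul_of_pos_right hδlt hApos
    have heq : (1/(2*(((d:ℝ)+1)*6^d))) * (((d:ℝ)+1)*6^d) = 1/2 := by
      field_simp
    rw [heq] at h
    linarith
  have hd3 : (3:ℝ) ≤ (d:ℝ)+1 := by
    have : (2:ℝ) ≤ (d:ℝ) := by exact_mod_cast hd
    linarith
  have h66 : (0:ℝ) < 6^d := by positivity
  have hδ6 : δ * 6^d ≤ 1/6 := by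
    nlinarith [hsmall, mul_pos hδ h66]
  have h2d : δ * 2 ^ d ≤ 1 := by
    have h26 : (2:ℝ)^d ≤ 6^d := by gcongr <;> norm_num
    nlinarith [mul_le_mul_of_nonneg_left h26 hδ.le]
  constructor
  · intro w
    set F := g δ d ⁻¹' {w} with hF
    have houter : ∀ z ∈ F, 2 < ‖z‖ → z ∈ (Qp δ d w).roots.toFinset := by
      intro z hz h2
      rw [Multiset.mem_toFinset, mem_roots']
      refine ⟨Qp_ne_zero hd, ?_⟩
      rw [Qp_root_iff hδ hd, ← g_outer δ d h2]
      exact hz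
    by_cases hin : ∃ z₀, z₀ ∈ F ∧ ‖z₀‖ ≤ 2
    · obtain ⟨z₀, hz₀F, hz₀2⟩ := hin
      have hw3 : ‖w‖ ≤ 3 := by
        rw [← show g δ d z₀ = w from hz₀F]
        exact g_abs_le δ d hδ h2d hz₀2
      obtain ⟨ρ, hρroot, hρ6⟩ := exists_small_root hδ hd hsmall hw3
      have hρmem : ρ ∈ (Qp δ d w).roots.toFinset := by
        rw [Multiset.mem_toFinset, mem_roots']
        exact ⟨Qp_ne_zero hd, hρroot⟩
      set S : Finset ℂ := insert z₀ (((Qp δ d w).roots.toFinset).erase ρ) with hS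
      have hsub : F ⊆ ↑S := by
        intro z hz
        rcases le_or_gt (‖z‖) 2 with h2 | h2
        · have hzz : z = z₀ := g_inj δ d hd hδ hsmall (by linarith) (by linarith)
            (by rw [show g δ d z = w from hz, show g δ d z₀ = w from hz₀F])
          rw [Finset.mem_coe, hS]
          rw [hzz]
          exact Finset.mem_insert_self _ _
        · have hzroot := houter z hz h2
          have hz6 : 6 < ‖z‖ := by
            by_contra h6
            push_neg at h6
            have hzz : z = z₀ := g_inj δ d hd hδ hsmall h6 (by linarith)
              (by rw [show g δ d z = w from hz, show g δ d z₀ = w from hz₀F])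
            rw [hzz] at h2; linarith
          have hzρ : z ≠ ρ := by
            intro h; rw [h] at hz6; linarith
          rw [Finset.mem_coe, hS, Finset.mem_insert]
          exact Or.inr (Finset.mem_erase.mpr ⟨hzρ, hzroot⟩)
      have hcardS : S.card ≤ d := by
        calc S.card ≤ (((Qp δ d w).roots.toFinset).erase ρ).card + 1 :=
              Finset.card_insert_le _ _
          _ = ((Qp δ d w).roots.toFinset).card - 1 + 1 := by
              rw [Finset.card_erase_of_mem hρmem]
          _ ≤ ((Qp δ d w).roots.toFinset).card := by
              have h1 : 1 ≤ ((Qp δ d w).roots.toFinset).card :=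
                Finset.card_pos.mpr ⟨ρ, hρmem⟩
              omega
          _ ≤ Multiset.card (Qp δ d w).roots := Multiset.toFinset_card_le _
          _ = d := Qp_card_roots hd
      have hfin : F.Finite := Set.Finite.subset (S.finite_toSet) hsub
      refine ⟨hfin, ?_⟩
      rw [Nat.card_coe_set_eq]
      calc F.ncard ≤ (↑S : Set ℂ).ncard := Set.ncard_le_ncard hsub (S.finite_toSet)
        _ = S.card := Set.ncard_coe_finset S
        _ ≤ d := hcardS
    · push_neg at hin
      have hsub : F ⊆ ↑((Qp δ d w).roots.toFinset) := by
        intro z hz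
        exact houter z hz (hin z hz)
      have hcardS : ((Qp δ d w).roots.toFinset).card ≤ d := by
        calc ((Qp δ d w).roots.toFinset).card ≤ Multiset.card (Qp δ d w).roots :=
              Multiset.toFinset_card_le _
          _ = d := Qp_card_roots hd
      have hfin : F.Finite :=
        Set.Finite.subset (((Qp δ d w).roots.toFinset).finite_toSet) hsub
      refine ⟨hfin, ?_⟩
      rw [Nat.card_coe_set_eq]
      calc F.ncard ≤ (↑((Qp δ d w).roots.toFinset) : Set ℂ).ncard :=
            Set.ncard_le_ncard hsub (((Qp δ d w).roots.toFinset).finite_toSet)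
        _ = ((Qp δ d w).roots.toFinset).card :=
            Set.ncard_coe_finset _
        _ ≤ d := hcardS
  · -- existence of a value with exactly d preimages
    set Dp : Polynomial ℂ := C (d:ℂ) * X ^ (d-1) + C ((δ:ℂ)⁻¹) with hDp
    have hDp0 : Dp ≠ 0 := Dp_ne_zero hd
    set Bad : Finset ℂ := Dp.roots.toFinset.image (fun z => z + (δ:ℂ) * z ^ d) with hBad
    set M : ℕ := Bad.sup (fun b => ⌈‖b‖⌉₊) with hM
    set w : ℂ := ((M + 4 : ℕ) : ℂ) with hw
    have hwabs : ‖w‖ = ((M+4 : ℕ) : ℝ) := by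
      rw [hw]; exact Complex.norm_natCast _
    have hw3 : 3 < ‖w‖ := by
      rw [hwabs]; push_cast; linarith [Nat.cast_nonneg (α := ℝ) M]
    have hwBad : ∀ x : ℂ, (C (d:ℂ) * X ^ (d-1) + C ((δ:ℂ)⁻¹)).IsRoot x →
        x + (δ:ℂ) * x ^ d ≠ w := by
      intro x hx heq
      have hxB : x + (δ:ℂ)*x^d ∈ Bad :=
        Finset.mem_image.mpr ⟨x, Multiset.mem_toFinset.mpr
          (mem_roots'.mpr ⟨hDp0, hx⟩), rfl⟩
      rw [heq] at hxB
      have h1 : ⌈‖w‖⌉₊ ≤ M :=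
        Finset.le_sup (f := fun b => ⌈‖b‖⌉₊) hxB
      have h2 : ‖w‖ ≤ (M:ℝ) :=
        le_trans (Nat.le_ceil _) (by exact_mod_cast h1)
      rw [hwabs] at h2
      push_cast at h2
      linarith
    have hsep := Qp_separable hδ hd (w := w) hwBad
    refine ⟨w, ?_⟩
    have hfib : g δ d ⁻¹' {w} = ↑((Qp δ d w).roots.toFinset) := by
      ext z
      simp only [mem_preimage, mem_singleton_iff, Finset.coe_sort_coe, Finset.mem_coe,
        Multiset.mem_toFinset]
      constructor
      · intro hz
        rcases le_or_gt (‖z‖) 2 with h2 | h2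
        · exfalso
          have := g_abs_le δ d hδ h2d h2
          rw [hz] at this
          linarith
        · rw [mem_roots']
          refine ⟨Qp_ne_zero hd, ?_⟩
          rw [Qp_root_iff hδ hd, ← g_outer δ d h2]
          exact hz
      · intro hz
        have hroot := (mem_roots'.mp hz).2
        have heq : z + (δ:ℂ)*z^d = w := (Qp_root_iff hδ hd).mp hroot
        have h2 : 2 < ‖z‖ := by
          by_contra h2
          push_neg at h2
          have habs2 : ‖w‖ ≤ 3 := by
            rw [← heq]
            have hp : ‖z‖ ^ d ≤ 2^d :=
              pow_le_pow_left₀ (norm_nonneg z) h2 d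
            calc ‖z + (δ:ℂ)*z^d‖
                ≤ ‖z‖ + ‖(δ:ℂ)*z^d‖ := norm_add_le _ _
              _ ≤ 2 + δ*2^d := by
                  rw [norm_mul, norm_pow, Complex.norm_real, Real.norm_eq_abs, _root_.abs_of_nonneg hδ.le]
                  have := mul_le_mul_of_nonneg_left hp hδ.le
                  linarith
              _ ≤ 3 := by linarith
          linarith
        rw [g_outer δ d h2]
        exact heq
    rw [hfib, Nat.card_coe_set_eq, Set.ncard_coe_finset,
      Multiset.toFinset_card_of_nodup (Polynomial.nodup_roots hsep), Qp_card_roots hd]
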